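/- (Angle bound (34) in the proof of Theorem 4.) Let n > r ≥ r* ≥ 1 be integers and τ ∈ (0,1). Let X₁ ∈ ℝ^{r×r}, and let X̂ ∈ ℝ^{n×r} be the block matrix with top block X₁ and bottom block 0. Let Z₁ ∈ ℝ^{r×r*}, Z₂ ∈ ℝ^{(n−r)×r*}, let Z ∈ ℝ^{n×r} have first r* columns given by stacking Z₁ over Z₂ and remaining columns zero, and set M* = ZZᵀ with rank(M*) = r*. Assume X̂X̂ᵀ ≠ ZZᵀ and ‖X̂X̂ᵀ − M*‖_F ≤ τ·λ_{r*}(M*). Then ‖Z₂Z₂ᵀ‖_F² / (‖Z₁Z₁ᵀ − X₁X₁ᵀ‖_F² + 2‖Z₁Z₂ᵀ‖_F² + ‖Z₂Z₂ᵀ‖_F²) ≤ τ/(2−τ) ≤ τ. -/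

import Mathlib

open scoped BigOperators
open Matrix

noncomputable section

/-- Euclidean norm of a real vector indexed by `Fin k`. -/
def enorm {k : ℕ} (v : Fin k → ℝ) : ℝ := Real.sqrt (∑ i, (v i) ^ 2)

/-- Frobenius norm of a real matrix. -/
def fnorm {a b : ℕ} (M : Matrix (Fin a) (Fin b) ℝ) : ℝ :=
  Real.sqrt (∑ i, ∑ j, (M i j) ^ 2)

/-- Frobenius inner product of two real matrices. -/
def finner {a b : ℕ} (M N : Matrix (Fin a) (Fin b) ℝ) : ℝ := ∑ i, ∑ j, M i j * N i j

open Classical in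
/-- The `i`-th largest eigenvalue (`0`-indexed, i.e. `eigval M 0` is the largest
eigenvalue and `eigval M ⟨k-1,_⟩` the smallest) of a real symmetric matrix
(junk value `0` if the matrix is not symmetric). -/
def eigval {k : ℕ} (M : Matrix (Fin k) (Fin k) ℝ) (i : Fin k) : ℝ :=
  if h : M.IsHermitian then
    h.eigenvalues (Tuple.sort h.eigenvalues ⟨k - 1 - i.val, by have := i.isLt; omega⟩)
  else 0

/-- Spectral norm of a real matrix: `√(λ₁(XᵀX))`. -/
def specNorm {a b : ℕ} (X : Matrix (Fin a) (Fin b) ℝ) : ℝ :=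
  if hb : 0 < b then Real.sqrt (eigval (Xᵀ * X) ⟨0, hb⟩) else 0

/-- Smallest singular value `σ_b(X)` of `X ∈ ℝ^{a×b}`: the square root of the
smallest eigenvalue of `XᵀX`. -/
def sigmaMin {a b : ℕ} (X : Matrix (Fin a) (Fin b) ℝ) : ℝ :=
  if hb : 0 < b then Real.sqrt (eigval (Xᵀ * X) ⟨b - 1, by omega⟩) else 0

/-- Vectorization of a square matrix. -/
def vecSq {n : ℕ} (M : Matrix (Fin n) (Fin n) ℝ) : Fin (n * n) → ℝ :=
  fun k => M (finProdFinEquiv.symm k).1 (finProdFinEquiv.symm k).2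

/-- Vectorization of an `n × r` matrix. -/
def vecR {n r : ℕ} (U : Matrix (Fin n) (Fin r) ℝ) : Fin (n * r) → ℝ :=
  fun k => U (finProdFinEquiv.symm k).1 (finProdFinEquiv.symm k).2

/-- `mat_S(v) = (V + Vᵀ)/2` where `vec V = v`. -/
def matS {n : ℕ} (v : Fin (n * n) → ℝ) : Matrix (Fin n) (Fin n) ℝ :=
  (1 / 2 : ℝ) • ((Matrix.of fun i j => v (finProdFinEquiv (i, j))) +
    (Matrix.of fun i j => v (finProdFinEquiv (i, j)))ᵀ)

/-- The sensing operator `𝒜(M) = (⟨A₁,M⟩, …, ⟨A_m,M⟩)`. -/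
def calA {n m : ℕ} (A : Fin m → Matrix (Fin n) (Fin n) ℝ)
    (M : Matrix (Fin n) (Fin n) ℝ) : Fin m → ℝ := fun i => finner (A i) M

/-- Matrix representation `𝐀 ∈ ℝ^{m×n²}` of `𝒜`, satisfying `𝐀 ⬝ vec M = 𝒜(M)`. -/
def bigA {n m : ℕ} (A : Fin m → Matrix (Fin n) (Fin n) ℝ) :
    Matrix (Fin m) (Fin (n * n)) ℝ := Matrix.of fun i k => vecSq (A i) k

/-- `𝒜` satisfies the `(δ, g)`-RIP property. -/
def RIP {n m : ℕ} (A : Fin m → Matrix (Fin n) (Fin n) ℝ) (δ : ℝ) (g : ℕ) : Prop :=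
  ∀ M : Matrix (Fin n) (Fin n) ℝ, M.rank ≤ g →
    (1 - δ) * fnorm M ^ 2 ≤ _root_.enorm (calA A M) ^ 2 ∧
      _root_.enorm (calA A M) ^ 2 ≤ (1 + δ) * fnorm M ^ 2

/-- The matrix `𝐗̂ ∈ ℝ^{n² × nr}` satisfying `𝐗̂ ⬝ vec U = vec (X̂Uᵀ + UX̂ᵀ)`. -/
def bigX {n r : ℕ} (X : Matrix (Fin n) (Fin r) ℝ) :
    Matrix (Fin (n * n)) (Fin (n * r)) ℝ :=
  Matrix.of fun k l =>
    (if (finProdFinEquiv.symm k).2 = (finProdFinEquiv.symm l).1 then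
      X (finProdFinEquiv.symm k).1 (finProdFinEquiv.symm l).2 else 0) +
    (if (finProdFinEquiv.symm k).1 = (finProdFinEquiv.symm l).1 then
      X (finProdFinEquiv.symm k).2 (finProdFinEquiv.symm l).2 else 0)

/-- The Kronecker product `I_r ⊗ G`, realized as an operator on vectorized
`n × r` matrices (it sends `vec U` to `vec (G * U)`). -/
def kronIdR {n : ℕ} (r : ℕ) (G : Matrix (Fin n) (Fin n) ℝ) :
    Matrix (Fin (n * r)) (Fin (n * r)) ℝ :=
  Matrix.of fun k l =>
    if (finProdFinEquiv.symm k).2 = (finProdFinEquiv.symm l).2 then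
      G (finProdFinEquiv.symm k).1 (finProdFinEquiv.symm l).1 else 0

/-- Loewner order: `A ⪯ B` iff `B - A` is positive semidefinite. -/
def PSDle {k : ℕ} (A B : Matrix (Fin k) (Fin k) ℝ) : Prop := (B - A).PosSemidef

/-- The objective `f(X) = ½‖𝒜(XXᵀ) − b + w‖²` with `b = 𝒜(M*)`. -/
def fobj {n m r : ℕ} (A : Fin m → Matrix (Fin n) (Fin n) ℝ)
    (Mstar : Matrix (Fin n) (Fin n) ℝ) (w : Fin m → ℝ)
    (X : Matrix (Fin n) (Fin r) ℝ) : ℝ :=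
  (1 / 2) * _root_.enorm (fun i => calA A (X * Xᵀ) i - calA A Mstar i + w i) ^ 2

/-- View a point of Euclidean space as an `n × r` matrix. -/
def toMat {n r : ℕ} (x : EuclideanSpace ℝ (Fin n × Fin r)) : Matrix (Fin n) (Fin r) ℝ :=
  Matrix.of fun i j => x (i, j)

/-- View an `n × r` matrix as a point of Euclidean space (whose inner product is
the Frobenius inner product). -/
def vecE {n r : ℕ} (X : Matrix (Fin n) (Fin r) ℝ) : EuclideanSpace ℝ (Fin n × Fin r) :=
  WithLp.toLp 2 (fun p : Fin n × Fin r => X p.1 p.2)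

/-- The objective as a function on Euclidean space. -/
def fE {n m : ℕ} (r : ℕ) (A : Fin m → Matrix (Fin n) (Fin n) ℝ)
    (Mstar : Matrix (Fin n) (Fin n) ℝ) (w : Fin m → ℝ) :
    EuclideanSpace ℝ (Fin n × Fin r) → ℝ :=
  fun x => fobj A Mstar w (toMat x)

/-- Hessian quadratic form `D²f(X)[U, U]` (second Fréchet derivative). -/
def hessQF {n m : ℕ} (r : ℕ) (A : Fin m → Matrix (Fin n) (Fin n) ℝ)
    (Mstar : Matrix (Fin n) (Fin n) ℝ) (w : Fin m → ℝ)
    (X U : Matrix (Fin n) (Fin r) ℝ) : ℝ :=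
  iteratedFDeriv ℝ 2 (fE r A Mstar w) (vecE X) ![vecE U, vecE U]

/-- Gradient `∇f(X)` with respect to the Frobenius inner product, as a matrix. -/
def gradf {n m : ℕ} (r : ℕ) (A : Fin m → Matrix (Fin n) (Fin n) ℝ)
    (Mstar : Matrix (Fin n) (Fin n) ℝ) (w : Fin m → ℝ)
    (X : Matrix (Fin n) (Fin r) ℝ) : Matrix (Fin n) (Fin r) ℝ :=
  toMat (gradient (fE r A Mstar w) (vecE X))

lemma fnorm_nonneg' {a b : ℕ} (M : Matrix (Fin a) (Fin b) ℝ) : 0 ≤ fnorm M :=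
  Real.sqrt_nonneg _

lemma fnorm_sq' {a b : ℕ} (M : Matrix (Fin a) (Fin b) ℝ) :
    fnorm M ^ 2 = ∑ i, ∑ j, (M i j) ^ 2 :=
  Real.sq_sqrt (by positivity)

lemma fin_sum_split {n r : ℕ} (h : r ≤ n) (f : Fin n → ℝ) :
    ∑ i, f i = (∑ i : Fin r, f ⟨i.val, by omega⟩) + ∑ i : Fin (n - r), f ⟨r + i.val, by omega⟩ := by
  classical
  set F : ℕ → ℝ := fun i => if h : i < n then f ⟨i, h⟩ else 0 with hF
  have h1 : ∑ i, f i = ∑ i ∈ Finset.range n, F i := by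
    rw [← Fin.sum_univ_eq_sum_range]
    refine Finset.sum_congr rfl fun i _ => ?_
    simp [hF, i.isLt]
  have h2 : (∑ i : Fin r, f ⟨i.val, by omega⟩) = ∑ i ∈ Finset.range r, F i := by
    rw [← Fin.sum_univ_eq_sum_range]
    refine Finset.sum_congr rfl fun i _ => ?_
    have : (i : ℕ) < n := by omega
    simp [hF, this]
  have h3 : (∑ i : Fin (n - r), f ⟨r + i.val, by omega⟩) = ∑ i ∈ Finset.Ico r n, F i := by
    rw [Finset.sum_Ico_eq_sum_range, ← Fin.sum_univ_eq_sum_range]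
    refine Finset.sum_congr rfl fun i _ => ?_
    have : r + (i : ℕ) < n := by omega
    simp [hF, this]
  rw [h1, h2, h3, Finset.range_eq_Ico, ← Finset.sum_Ico_consecutive F (Nat.zero_le r) h,
    ← Finset.range_eq_Ico]

lemma sum_fin_ite {r rs : ℕ} (h : rs ≤ r) (f : Fin rs → ℝ) :
    ∑ k : Fin r, (if hk : (k : ℕ) < rs then f ⟨k, hk⟩ else 0) = ∑ k : Fin rs, f k := by
  classical
  set F : ℕ → ℝ := fun k => if hk : k < rs then f ⟨k, hk⟩ else 0 with hF
  have h1 : ∑ k : Fin r, (if hk : (k : ℕ) < rs then f ⟨k, hk⟩ else 0)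
      = ∑ k ∈ Finset.range r, F k := by
    rw [← Fin.sum_univ_eq_sum_range]
  have h2 : ∑ k : Fin rs, f k = ∑ k ∈ Finset.range rs, F k := by
    rw [← Fin.sum_univ_eq_sum_range]
    refine Finset.sum_congr rfl fun k _ => ?_
    simp [hF, k.isLt]
  rw [h1, h2]
  refine (Finset.sum_subset (Finset.range_subset_range.2 h) fun k _ hk => ?_).symm
  simp only [Finset.mem_range, not_lt] at hk
  simp [hF, Nat.not_lt.2 hk]

lemma psd_diag {n : ℕ} {N : Matrix (Fin n) (Fin n) ℝ} (hN : N.PosSemidef) (i : Fin n) :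
    0 ≤ N i i := by
  exact hN.diag_nonneg

lemma psd_aux {n : ℕ} {M : Matrix (Fin n) (Fin n) ℝ} (h : M.IsHermitian) (lam : ℝ)
    (hall : ∀ i, 0 ≤ h.eigenvalues i * h.eigenvalues i - lam * h.eigenvalues i) :
    (M * M - lam • M).PosSemidef := by
  set U : Matrix (Fin n) (Fin n) ℝ := (h.eigenvectorUnitary : Matrix (Fin n) (Fin n) ℝ) with hU
  have hUU' : star U * U = 1 := (Matrix.mem_unitaryGroup_iff').mp (h.eigenvectorUnitary).2
  have hspec : M = U * Matrix.diagonal (RCLike.ofReal ∘ h.eigenvalues) * star U :=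
    h.spectral_theorem
  have hdiag : (Matrix.diagonal (RCLike.ofReal ∘ h.eigenvalues) : Matrix (Fin n) (Fin n) ℝ)
      = Matrix.diagonal h.eigenvalues := by congr 1
  rw [hdiag] at hspec
  have hsplit : Matrix.diagonal (fun i => h.eigenvalues i * h.eigenvalues i - lam * h.eigenvalues i)
      = Matrix.diagonal h.eigenvalues * Matrix.diagonal h.eigenvalues
        - lam • Matrix.diagonal h.eigenvalues := by
    rw [Matrix.diagonal_mul_diagonal, ← Matrix.diagonal_smul]
    ext i j
    by_cases hij : i = j <;> simp [Matrix.diagonal, hij]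
  have key : M * M - lam • M
      = U * Matrix.diagonal (fun i => h.eigenvalues i * h.eigenvalues i - lam * h.eigenvalues i) * star U := by
    rw [hsplit]
    conv_lhs => rw [hspec]
    rw [Matrix.mul_sub, Matrix.sub_mul]
    congr 1
    · simp only [Matrix.mul_assoc]
      congr 1
      congr 1
      rw [← Matrix.mul_assoc, ← Matrix.mul_assoc, hUU', Matrix.one_mul]
    · rw [Matrix.mul_smul, Matrix.smul_mul]
  rw [key]
  have hd : (Matrix.diagonal (fun i => h.eigenvalues i * h.eigenvalues i - lam * h.eigenvalues i)).PosSemidef :=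
    Matrix.posSemidef_diagonal_iff.mpr hall
  simpa [Matrix.star_eq_conjTranspose] using hd.mul_mul_conjTranspose_same U

lemma eig_key {n rs : ℕ} (hrs1 : 1 ≤ rs) (hrsn : rs < n)
    {M : Matrix (Fin n) (Fin n) ℝ} (hM : M.PosSemidef) (hrk : M.rank = rs) :
    0 < eigval M ⟨rs - 1, by omega⟩ ∧
    (M * M - eigval M ⟨rs - 1, by omega⟩ • M).PosSemidef := by
  classical
  have h : M.IsHermitian := hM.isHermitian
  set σ := Tuple.sort h.eigenvalues with hσ
  set g : Fin n → ℝ := h.eigenvalues ∘ σ with hg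
  have hmono : Monotone g := Tuple.monotone_sort _
  have hnn : ∀ i, 0 ≤ h.eigenvalues i := fun i => hM.eigenvalues_nonneg i
  have hlamEq : eigval M ⟨rs - 1, by omega⟩ = g ⟨n - rs, by omega⟩ := by
    rw [eigval, dif_pos h]
    have haux : ∀ (a b : Fin n), a = b → h.eigenvalues (σ a) = h.eigenvalues (σ b) :=
      fun a b hab => by rw [hab]
    apply haux
    apply Fin.ext
    simp only [Fin.val_mk]
    omega
  have hcard : (Finset.univ.filter (fun i => g i ≠ 0)).card = rs := by
    have h1 : Fintype.card {i // h.eigenvalues i ≠ 0} = rs := by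
      rw [← h.rank_eq_card_non_zero_eigs, hrk]
    have h2 : Fintype.card {i // g i ≠ 0} = rs := by
      rw [← h1]
      exact Fintype.card_congr (σ.subtypeEquiv (fun i => Iff.rfl))
    rw [← h2, Fintype.card_subtype]
  have hsupp : ∀ i : Fin n, g i ≠ 0 → n - rs ≤ i.val := by
    intro i hi
    by_contra hlt
    push_neg at hlt
    have hsub : Finset.Ici i ⊆ Finset.univ.filter (fun j => g j ≠ 0) := by
      intro j hj
      simp only [Finset.mem_Ici] at hj
      simp only [Finset.mem_filter, Finset.mem_univ, true_and]
      have h1 : g i ≤ g j := hmono hj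
      have h2 : 0 < g i := lt_of_le_of_ne (hnn (σ i)) (Ne.symm hi)
      intro hc
      rw [hc] at h1
      linarith
    have hc := Finset.card_le_card hsub
    simp only [hcard, Fin.card_Ici] at hc
    omega
  have hlampos : 0 < g ⟨n - rs, by omega⟩ := by
    rcases lt_or_eq_of_le (hnn (σ ⟨n - rs, by omega⟩)) with hpos | heq
    · exact hpos
    · exfalso
      have hzero : g ⟨n - rs, by omega⟩ = 0 := heq.symm
      have hsub : Finset.univ.filter (fun j => g j ≠ 0) ⊆
          Finset.Ioi (⟨n - rs, by omega⟩ : Fin n) := by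
        intro j hj
        simp only [Finset.mem_filter, Finset.mem_univ, true_and] at hj
        simp only [Finset.mem_Ioi]
        by_contra hle
        push_neg at hle
        have h1 : g j ≤ g ⟨n - rs, by omega⟩ := hmono hle
        have : g j = 0 := le_antisymm (by linarith [hzero ▸ h1]) (hnn (σ j))
        exact hj this
      have hc := Finset.card_le_card hsub
      simp only [hcard, Fin.card_Ioi] at hc
      omega
  have hall : ∀ i, h.eigenvalues i ≠ 0 → g ⟨n - rs, by omega⟩ ≤ h.eigenvalues i := by
    intro i hi
    have he : h.eigenvalues i = g (σ.symm i) := by simp [hg]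
    rw [he] at hi ⊢
    refine hmono ?_
    have := hsupp _ hi
    exact Fin.mk_le_of_le_val this
  rw [hlamEq]
  refine ⟨hlampos, psd_aux h _ (fun i => ?_)⟩
  rcases eq_or_ne (h.eigenvalues i) 0 with hz | hz
  · simp [hz]
  · have h1 := hall i hz
    have h2 : 0 < h.eigenvalues i := lt_of_le_of_ne (hnn i) (Ne.symm hz)
    nlinarith

/-- the unified column block of Z -/
def zcAux {n r rs : ℕ} (Z1 : Matrix (Fin r) (Fin rs) ℝ)
    (Z2 : Matrix (Fin (n - r)) (Fin rs) ℝ) : Fin n → Fin rs → ℝ := fun i k =>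
  if h : (i : ℕ) < r then Z1 ⟨i, h⟩ k
  else Z2 ⟨(i : ℕ) - r, by have := i.isLt; omega⟩ k

lemma zcAux_low {n r rs : ℕ} (hrn : r ≤ n) (Z1 : Matrix (Fin r) (Fin rs) ℝ)
    (Z2 : Matrix (Fin (n - r)) (Fin rs) ℝ) (i : Fin r) (k : Fin rs) :
    zcAux Z1 Z2 (⟨i.val, by omega⟩ : Fin n) k = Z1 i k := by
  rw [zcAux, dif_pos i.isLt]

lemma zcAux_high {n r rs : ℕ} (Z1 : Matrix (Fin r) (Fin rs) ℝ)
    (Z2 : Matrix (Fin (n - r)) (Fin rs) ℝ) (i : Fin (n - r)) (k : Fin rs) :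
    zcAux Z1 Z2 (⟨r + i.val, by have := i.isLt; omega⟩ : Fin n) k = Z2 i k := by
  rw [zcAux, dif_neg (by simp)]
  congr 1
  apply Fin.ext
  simp

lemma arith_final {τ lam : ℝ} (hτ0 : 0 < τ) (hlam : 0 < lam)
    (a1s b2s d a t : ℝ) (ha' : 0 ≤ a) (ha1 : 0 ≤ a1s) (hb2 : 0 ≤ b2s) (hdpos : 0 < d)
    (hd2 : d ^ 2 = a1s + 2 * b2s + a ^ 2) (hk : lam * t ≤ b2s + a ^ 2) (hat : a ≤ t)
    (hdl : d ≤ τ * lam) :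
    a ^ 2 * (2 - τ) ≤ τ * d ^ 2 := by
  have had : a ≤ d := by nlinarith
  have h1 : lam * a ≤ lam * t := mul_le_mul_of_nonneg_left hat hlam.le
  have h2 : 2 * (lam * a) - a ^ 2 ≤ d ^ 2 := by nlinarith
  have h3 : d * a ≤ (τ * lam) * a := mul_le_mul_of_nonneg_right hdl ha'
  have h4 : a * a ≤ d * a := mul_le_mul_of_nonneg_right had ha'
  have h5 : τ * (2 * (lam * a) - a ^ 2) ≤ τ * d ^ 2 := mul_le_mul_of_nonneg_left h2 hτ0.le
  nlinarith

lemma arith_tau {τ : ℝ} (hτ0 : 0 < τ) (hτ1 : τ < 1) : τ / (2 - τ) ≤ τ := by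
  rw [div_le_iff₀ (by linarith)]
  nlinarith

/-- angle bound (34) in the proof of Theorem 4. -/
theorem statement12
    (n r rs : ℕ) (hrs : 1 ≤ rs) (hrrs : rs ≤ r) (hrn : r < n)
    (τ : ℝ) (hτ0 : 0 < τ) (hτ1 : τ < 1)
    (X1 : Matrix (Fin r) (Fin r) ℝ)
    (Z1 : Matrix (Fin r) (Fin rs) ℝ) (Z2 : Matrix (Fin (n - r)) (Fin rs) ℝ)
    (Xhat Z : Matrix (Fin n) (Fin r) ℝ)
    (hX : ∀ (i : Fin n) (j : Fin r),
      Xhat i j = if h : (i : ℕ) < r then X1 ⟨i, h⟩ j else 0)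
    (hZ : ∀ (i : Fin n) (j : Fin r),
      Z i j = if hj : (j : ℕ) < rs then
          (if hi : (i : ℕ) < r then Z1 ⟨i, hi⟩ ⟨j, hj⟩
            else Z2 ⟨(i : ℕ) - r, by have := i.isLt; omega⟩ ⟨j, hj⟩)
        else 0)
    (hrank : (Z * Zᵀ).rank = rs)
    (hne : Xhat * Xhatᵀ ≠ Z * Zᵀ)
    (hloc : fnorm (Xhat * Xhatᵀ - Z * Zᵀ) ≤ τ * eigval (Z * Zᵀ) ⟨rs - 1, by omega⟩) :
    fnorm (Z2 * Z2ᵀ) ^ 2 /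
        (fnorm (Z1 * Z1ᵀ - X1 * X1ᵀ) ^ 2 + 2 * fnorm (Z1 * Z2ᵀ) ^ 2 +
          fnorm (Z2 * Z2ᵀ) ^ 2) ≤ τ / (2 - τ) ∧
    τ / (2 - τ) ≤ τ := by
  classical
  have hrn' : r ≤ n := le_of_lt hrn
  -- PSD of M = Z * Zᵀ
  have hconj : Zᴴ = Zᵀ := by ext i j; simp [Matrix.conjTranspose_apply]
  have hpsd : (Z * Zᵀ).PosSemidef := by
    rw [← hconj]; exact Matrix.posSemidef_self_mul_conjTranspose Z
  obtain ⟨hlampos, hpsdN⟩ := eig_key hrs (by omega) hpsd hrank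
  obtain ⟨lam, hlamdef⟩ : ∃ l : ℝ, l = eigval (Z * Zᵀ) ⟨rs - 1, by omega⟩ := ⟨_, rfl⟩
  have hlampos' : 0 < lam := hlamdef ▸ hlampos
  have hpsdN' : (Z * Zᵀ * (Z * Zᵀ) - lam • (Z * Zᵀ)).PosSemidef := hlamdef ▸ hpsdN
  have hloc' : fnorm (Xhat * Xhatᵀ - Z * Zᵀ) ≤ τ * lam := by rw [hlamdef]; exact hloc
  -- entry description of M
  have hM_entry : ∀ i j : Fin n, (Z * Zᵀ) i j = ∑ k : Fin rs, zcAux Z1 Z2 i k * zcAux Z1 Z2 j k := by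
    intro i j
    rw [Matrix.mul_apply]
    have step : ∀ k : Fin r, Z i k * Zᵀ k j
        = (if hk : (k : ℕ) < rs then zcAux Z1 Z2 i ⟨k, hk⟩ * zcAux Z1 Z2 j ⟨k, hk⟩ else 0) := by
      intro k
      rw [Matrix.transpose_apply, hZ, hZ]
      by_cases hk : (k : ℕ) < rs
      · rw [dif_pos hk, dif_pos hk, dif_pos hk, zcAux, zcAux]
      · simp [hk]
    calc ∑ k : Fin r, Z i k * Zᵀ k j
        = ∑ k : Fin r, (if hk : (k : ℕ) < rs then zcAux Z1 Z2 i ⟨k, hk⟩ * zcAux Z1 Z2 j ⟨k, hk⟩ else 0) :=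
          Finset.sum_congr rfl fun k _ => step k
      _ = ∑ k : Fin rs, zcAux Z1 Z2 i k * zcAux Z1 Z2 j k :=
          sum_fin_ite hrrs (fun k => zcAux Z1 Z2 i k * zcAux Z1 Z2 j k)
  -- block entries of M
  have hMTL : ∀ (i j : Fin r), (Z * Zᵀ) ⟨i.val, by omega⟩ ⟨j.val, by omega⟩ = (Z1 * Z1ᵀ) i j := by
    intro i j
    rw [hM_entry, Matrix.mul_apply]
    exact Finset.sum_congr rfl fun k _ => by
      rw [zcAux_low hrn', zcAux_low hrn', Matrix.transpose_apply]
  have hMTR : ∀ (i : Fin r) (j : Fin (n - r)),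
      (Z * Zᵀ) ⟨i.val, by omega⟩ ⟨r + j.val, by have := j.isLt; omega⟩ = (Z1 * Z2ᵀ) i j := by
    intro i j
    rw [hM_entry, Matrix.mul_apply]
    exact Finset.sum_congr rfl fun k _ => by
      rw [zcAux_low hrn', zcAux_high, Matrix.transpose_apply]
  have hMBL : ∀ (i : Fin (n - r)) (j : Fin r),
      (Z * Zᵀ) ⟨r + i.val, by have := i.isLt; omega⟩ ⟨j.val, by omega⟩ = (Z1 * Z2ᵀ) j i := by
    intro i j
    rw [hM_entry, Matrix.mul_apply]
    exact Finset.sum_congr rfl fun k _ => by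
      rw [zcAux_high, zcAux_low hrn', Matrix.transpose_apply, mul_comm]
  have hMBR : ∀ (i j : Fin (n - r)),
      (Z * Zᵀ) ⟨r + i.val, by have := i.isLt; omega⟩ ⟨r + j.val, by have := j.isLt; omega⟩
        = (Z2 * Z2ᵀ) i j := by
    intro i j
    rw [hM_entry, Matrix.mul_apply]
    exact Finset.sum_congr rfl fun k _ => by
      rw [zcAux_high, zcAux_high, Matrix.transpose_apply]
  -- block entries of Xhat * Xhatᵀ
  have hXTL : ∀ (i j : Fin r),
      (Xhat * Xhatᵀ) ⟨i.val, by omega⟩ ⟨j.val, by omega⟩ = (X1 * X1ᵀ) i j := by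
    intro i j
    rw [Matrix.mul_apply, Matrix.mul_apply]
    refine Finset.sum_congr rfl fun k _ => ?_
    rw [Matrix.transpose_apply, Matrix.transpose_apply, hX, hX,
      dif_pos (show ((⟨i.val, by omega⟩ : Fin n) : ℕ) < r from i.isLt),
      dif_pos (show ((⟨j.val, by omega⟩ : Fin n) : ℕ) < r from j.isLt)]
  have hXzero : ∀ (i : Fin n), ¬ ((i : ℕ) < r) → ∀ j : Fin n, (Xhat * Xhatᵀ) i j = 0 ∧
      (Xhat * Xhatᵀ) j i = 0 := by
    intro i hi j
    constructor
    · rw [Matrix.mul_apply]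
      refine Finset.sum_eq_zero fun k _ => ?_
      rw [hX i, dif_neg hi, zero_mul]
    · rw [Matrix.mul_apply]
      refine Finset.sum_eq_zero fun k _ => ?_
      rw [Matrix.transpose_apply, hX i, dif_neg hi, mul_zero]
  -- block entries of D = Xhat * Xhatᵀ - Z * Zᵀ
  have hDTL : ∀ (i j : Fin r),
      (Xhat * Xhatᵀ - Z * Zᵀ) ⟨i.val, by omega⟩ ⟨j.val, by omega⟩
        = (X1 * X1ᵀ) i j - (Z1 * Z1ᵀ) i j := by
    intro i j; rw [Matrix.sub_apply, hXTL, hMTL]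
  have hDTR : ∀ (i : Fin r) (j : Fin (n - r)),
      (Xhat * Xhatᵀ - Z * Zᵀ) ⟨i.val, by omega⟩ ⟨r + j.val, by have := j.isLt; omega⟩
        = -((Z1 * Z2ᵀ) i j) := by
    intro i j
    rw [Matrix.sub_apply, hMTR,
      ((hXzero ⟨r + j.val, by have := j.isLt; omega⟩ (by simp) ⟨i.val, by omega⟩).2), zero_sub]
  have hDBL : ∀ (i : Fin (n - r)) (j : Fin r),
      (Xhat * Xhatᵀ - Z * Zᵀ) ⟨r + i.val, by have := i.isLt; omega⟩ ⟨j.val, by omega⟩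
        = -((Z1 * Z2ᵀ) j i) := by
    intro i j
    rw [Matrix.sub_apply, hMBL,
      ((hXzero ⟨r + i.val, by have := i.isLt; omega⟩ (by simp) ⟨j.val, by omega⟩).1), zero_sub]
  have hDBR : ∀ (i j : Fin (n - r)),
      (Xhat * Xhatᵀ - Z * Zᵀ) ⟨r + i.val, by have := i.isLt; omega⟩
        ⟨r + j.val, by have := j.isLt; omega⟩ = -((Z2 * Z2ᵀ) i j) := by
    intro i j
    rw [Matrix.sub_apply, hMBR,
      ((hXzero ⟨r + i.val, by have := i.isLt; omega⟩ (by simp) ⟨r + j.val, by have := j.isLt; omega⟩).1),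
      zero_sub]
  -- Frobenius norm decomposition
  have hnormD : fnorm (Xhat * Xhatᵀ - Z * Zᵀ) ^ 2
      = fnorm (Z1 * Z1ᵀ - X1 * X1ᵀ) ^ 2 + 2 * fnorm (Z1 * Z2ᵀ) ^ 2 + fnorm (Z2 * Z2ᵀ) ^ 2 := by
    rw [fnorm_sq', fnorm_sq', fnorm_sq', fnorm_sq']
    rw [fin_sum_split hrn' (fun i => ∑ j, ((Xhat * Xhatᵀ - Z * Zᵀ) i j) ^ 2)]
    have inner1 : ∀ i : Fin r,
        (∑ j : Fin n, ((Xhat * Xhatᵀ - Z * Zᵀ) (⟨i.val, by omega⟩ : Fin n) j) ^ 2)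
          = (∑ j : Fin r, ((Z1 * Z1ᵀ - X1 * X1ᵀ) i j) ^ 2)
            + ∑ j : Fin (n - r), ((Z1 * Z2ᵀ) i j) ^ 2 := by
      intro i
      rw [fin_sum_split hrn'
        (fun j => ((Xhat * Xhatᵀ - Z * Zᵀ) (⟨i.val, by omega⟩ : Fin n) j) ^ 2)]
      congr 1
      · exact Finset.sum_congr rfl fun j _ => by rw [hDTL i j, Matrix.sub_apply]; ring
      · exact Finset.sum_congr rfl fun j _ => by rw [hDTR i j]; ring
    have inner2 : ∀ i : Fin (n - r),
        (∑ j : Fin n, ((Xhat * Xhatᵀ - Z * Zᵀ) (⟨r + i.val, by have := i.isLt; omega⟩ : Fin n) j) ^ 2)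
          = (∑ j : Fin r, ((Z1 * Z2ᵀ) j i) ^ 2)
            + ∑ j : Fin (n - r), ((Z2 * Z2ᵀ) i j) ^ 2 := by
      intro i
      rw [fin_sum_split hrn'
        (fun j => ((Xhat * Xhatᵀ - Z * Zᵀ) (⟨r + i.val, by have := i.isLt; omega⟩ : Fin n) j) ^ 2)]
      congr 1
      · exact Finset.sum_congr rfl fun j _ => by rw [hDBL i j]; ring
      · exact Finset.sum_congr rfl fun j _ => by rw [hDBR i j]; ring
    have eTop : (∑ i : Fin r, ∑ j : Fin n,
          ((Xhat * Xhatᵀ - Z * Zᵀ) (⟨i.val, by omega⟩ : Fin n) j) ^ 2)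
        = (∑ i : Fin r, ∑ j : Fin r, ((Z1 * Z1ᵀ - X1 * X1ᵀ) i j) ^ 2)
          + ∑ i : Fin r, ∑ j : Fin (n - r), ((Z1 * Z2ᵀ) i j) ^ 2 := by
      rw [← Finset.sum_add_distrib]
      exact Finset.sum_congr rfl fun i _ => inner1 i
    have eBot : (∑ i : Fin (n - r), ∑ j : Fin n,
          ((Xhat * Xhatᵀ - Z * Zᵀ) (⟨r + i.val, by have := i.isLt; omega⟩ : Fin n) j) ^ 2)
        = (∑ i : Fin (n - r), ∑ j : Fin r, ((Z1 * Z2ᵀ) j i) ^ 2)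
          + ∑ i : Fin (n - r), ∑ j : Fin (n - r), ((Z2 * Z2ᵀ) i j) ^ 2 := by
      rw [← Finset.sum_add_distrib]
      exact Finset.sum_congr rfl fun i _ => inner2 i
    rw [eTop, eBot]
    have eComm : (∑ i : Fin (n - r), ∑ j : Fin r, ((Z1 * Z2ᵀ) j i) ^ 2)
        = ∑ j : Fin r, ∑ i : Fin (n - r), ((Z1 * Z2ᵀ) j i) ^ 2 := Finset.sum_comm
    rw [eComm]
    ring
  -- symmetry of Z2 * Z2ᵀ
  have hCsym : ∀ i j : Fin (n - r), (Z2 * Z2ᵀ) i j = (Z2 * Z2ᵀ) j i := by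
    intro i j
    rw [Matrix.mul_apply, Matrix.mul_apply]
    exact Finset.sum_congr rfl fun k _ => by
      rw [Matrix.transpose_apply, Matrix.transpose_apply, mul_comm]
  -- diagonal entries of M*M in the bottom block
  have hMM : ∀ j : Fin (n - r),
      (Z * Zᵀ * (Z * Zᵀ)) (⟨r + j.val, by have := j.isLt; omega⟩ : Fin n)
          (⟨r + j.val, by have := j.isLt; omega⟩ : Fin n)
        = (∑ i : Fin r, ((Z1 * Z2ᵀ) i j) ^ 2) + ∑ i : Fin (n - r), ((Z2 * Z2ᵀ) i j) ^ 2 := by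
    intro j
    rw [Matrix.mul_apply]
    rw [fin_sum_split hrn' (fun k =>
      (Z * Zᵀ) (⟨r + j.val, by have := j.isLt; omega⟩ : Fin n) k
        * (Z * Zᵀ) k (⟨r + j.val, by have := j.isLt; omega⟩ : Fin n))]
    congr 1
    · exact Finset.sum_congr rfl fun i _ => by rw [hMBL j i, hMTR i j]; ring
    · exact Finset.sum_congr rfl fun i _ => by rw [hMBR j i, hMBR i j, hCsym j i]; ring
  -- per-entry PSD bound
  have hterm : ∀ j : Fin (n - r),
      0 ≤ (∑ i : Fin r, ((Z1 * Z2ᵀ) i j) ^ 2) + (∑ i : Fin (n - r), ((Z2 * Z2ᵀ) i j) ^ 2)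
          - lam * (Z2 * Z2ᵀ) j j := by
    intro j
    have h := psd_diag hpsdN' (⟨r + j.val, by have := j.isLt; omega⟩ : Fin n)
    rw [Matrix.sub_apply, Matrix.smul_apply, smul_eq_mul] at h
    rw [hMM j, hMBR j j] at h
    exact h
  have hkey : lam * (∑ j : Fin (n - r), (Z2 * Z2ᵀ) j j)
      ≤ fnorm (Z1 * Z2ᵀ) ^ 2 + fnorm (Z2 * Z2ᵀ) ^ 2 := by
    have hsum := Finset.sum_nonneg (fun j (_ : j ∈ Finset.univ) => hterm j)
    rw [Finset.sum_sub_distrib, Finset.sum_add_distrib, ← Finset.mul_sum] at hsum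
    have e1 : (∑ j : Fin (n - r), ∑ i : Fin r, ((Z1 * Z2ᵀ) i j) ^ 2)
        = fnorm (Z1 * Z2ᵀ) ^ 2 := by
      rw [fnorm_sq']; exact Finset.sum_comm
    have e2 : (∑ j : Fin (n - r), ∑ i : Fin (n - r), ((Z2 * Z2ᵀ) i j) ^ 2)
        = fnorm (Z2 * Z2ᵀ) ^ 2 := by
      rw [fnorm_sq']; exact Finset.sum_comm
    rw [e1, e2] at hsum
    linarith
  -- trace nonneg and Cauchy-Schwarz
  have htr_nonneg : 0 ≤ ∑ j : Fin (n - r), (Z2 * Z2ᵀ) j j := by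
    refine Finset.sum_nonneg fun j _ => ?_
    rw [Matrix.mul_apply]
    refine Finset.sum_nonneg fun k _ => ?_
    rw [Matrix.transpose_apply]
    exact mul_self_nonneg _
  have hCS : fnorm (Z2 * Z2ᵀ) ≤ ∑ j : Fin (n - r), (Z2 * Z2ᵀ) j j := by
    have hsq : fnorm (Z2 * Z2ᵀ) ^ 2 ≤ (∑ j : Fin (n - r), (Z2 * Z2ᵀ) j j) ^ 2 := by
      rw [fnorm_sq']
      calc ∑ i, ∑ j, ((Z2 * Z2ᵀ) i j) ^ 2
          ≤ ∑ i, ∑ j, (Z2 * Z2ᵀ) i i * (Z2 * Z2ᵀ) j j := by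
            refine Finset.sum_le_sum fun i _ => Finset.sum_le_sum fun j _ => ?_
            have hcs := Finset.sum_mul_sq_le_sq_mul_sq Finset.univ
              (fun k => Z2 i k) (fun k => Z2 j k)
            have e1 : (Z2 * Z2ᵀ) i j = ∑ k, Z2 i k * Z2 j k := by
              rw [Matrix.mul_apply]
              exact Finset.sum_congr rfl fun k _ => by rw [Matrix.transpose_apply]
            have e2 : (Z2 * Z2ᵀ) i i = ∑ k, (Z2 i k) ^ 2 := by
              rw [Matrix.mul_apply]
              exact Finset.sum_congr rfl fun k _ => by rw [Matrix.transpose_apply]; ring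
            have e3 : (Z2 * Z2ᵀ) j j = ∑ k, (Z2 j k) ^ 2 := by
              rw [Matrix.mul_apply]
              exact Finset.sum_congr rfl fun k _ => by rw [Matrix.transpose_apply]; ring
            rw [e1, e2, e3]
            exact hcs
        _ = (∑ j : Fin (n - r), (Z2 * Z2ᵀ) j j) ^ 2 := by
            rw [← Finset.sum_mul_sum]
            ring
    nlinarith [fnorm_nonneg' (Z2 * Z2ᵀ)]
  -- positivity of fnorm D
  have hDne : Xhat * Xhatᵀ - Z * Zᵀ ≠ 0 := sub_ne_zero.mpr hne
  have hDpos : 0 < fnorm (Xhat * Xhatᵀ - Z * Zᵀ) := by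
    rcases lt_or_eq_of_le (fnorm_nonneg' (Xhat * Xhatᵀ - Z * Zᵀ)) with h | h
    · exact h
    · exfalso
      apply hDne
      have h2 : fnorm (Xhat * Xhatᵀ - Z * Zᵀ) ^ 2 = 0 := by rw [← h]; ring
      rw [fnorm_sq'] at h2
      ext i j
      have hz := (Finset.sum_eq_zero_iff_of_nonneg
        (fun i _ => Finset.sum_nonneg fun j _ => sq_nonneg _)).mp h2 i (Finset.mem_univ i)
      have hz2 := (Finset.sum_eq_zero_iff_of_nonneg
        (fun j _ => sq_nonneg _)).mp hz j (Finset.mem_univ j)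
      have := pow_eq_zero_iff (two_ne_zero) |>.mp hz2
      simpa using this
  -- final arithmetic
  have ha : 0 ≤ fnorm (Z2 * Z2ᵀ) := fnorm_nonneg' _
  have hden : 0 < fnorm (Z1 * Z1ᵀ - X1 * X1ᵀ) ^ 2 + 2 * fnorm (Z1 * Z2ᵀ) ^ 2
      + fnorm (Z2 * Z2ᵀ) ^ 2 := by
    rw [← hnormD]
    exact pow_pos hDpos 2
  have h2τ : (0:ℝ) < 2 - τ := by linarith
  constructor
  · rw [div_le_div_iff₀ hden h2τ, ← hnormD]
    exact arith_final hτ0 hlampos' (fnorm (Z1 * Z1ᵀ - X1 * X1ᵀ) ^ 2) (fnorm (Z1 * Z2ᵀ) ^ 2)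
      (fnorm (Xhat * Xhatᵀ - Z * Zᵀ)) (fnorm (Z2 * Z2ᵀ))
      (∑ j : Fin (n - r), (Z2 * Z2ᵀ) j j)
      ha (sq_nonneg _) (sq_nonneg _) hDpos hnormD hkey hCS hloc'
  · exact arith_tau hτ0 hτ1
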